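/- Let A be a bounded self-adjoint operator, x an eigenvector with eigenvalue λ, and y a nonzero vector with 0 < ∠{x,y} < π/2. Then |λ − ρ(y)| ≤ (‖r(y)‖/‖y‖)·tan(∠{x,y}), where r(y) = Ay − ρ(y)y. Moreover, equality holds if and only if span{x,y} is A-invariant. -/

import Mathlib

open scoped RealInnerProductSpace
open Submodule

noncomputable section

variable {H : Type*} [NormedAddCommGroup H] [InnerProductSpace ℝ H]

/-- The Rayleigh quotient of `x` with respect to `A`. -/
def rq (A : H →L[ℝ] H) (x : H) : ℝ := ⟪x, A x⟫ / ⟪x, x⟫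

/-- The residual of `x` with respect to `A`. -/
def res (A : H →L[ℝ] H) (x : H) : H := A x - rq A x • x

/-- The acute angle between two vectors. -/
def ang (x y : H) : ℝ := Real.arccos (|⟪x, y⟫| / (‖x‖ * ‖y‖))

/-- Mixed bound: if `x` is an eigenvector of `A` with eigenvalue `λ` and `y ≠ 0` with
`0 < ∠{x,y} < π/2`, then `|λ − ρ(y)| ≤ (‖r(y)‖/‖y‖)·tan∠{x,y}`, with equality if and only
if `span{x,y}` is `A`-invariant. -/
theorem stmt_16 [CompleteSpace H] (A : H →L[ℝ] H) (hA : IsSelfAdjoint A)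
    (lam : ℝ) (x : H) (hx : x ≠ 0) (heig : A x = lam • x)
    (y : H) (hy : y ≠ 0)
    (hang₀ : 0 < ang x y) (hang₁ : ang x y < Real.pi / 2) :
    |lam - rq A y| ≤ ‖res A y‖ / ‖y‖ * Real.tan (ang x y) ∧
    (|lam - rq A y| = ‖res A y‖ / ‖y‖ * Real.tan (ang x y) ↔
      ∀ z ∈ Submodule.span ℝ ({x, y} : Set H),
        A z ∈ Submodule.span ℝ ({x, y} : Set H)) := by
  have hsym := ContinuousLinearMap.isSelfAdjoint_iff_isSymmetric.mp hA
  have hyy : ⟪y, y⟫ = ‖y‖ ^ 2 := real_inner_self_eq_norm_sq y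
  have hny : (0:ℝ) < ‖y‖ := norm_pos_iff.mpr hy
  have hnx : (0:ℝ) < ‖x‖ := norm_pos_iff.mpr hx
  set ρ := rq A y with hρ
  set α := (⟪x, y⟫ : ℝ) with hα
  set c := |α| / (‖x‖ * ‖y‖) with hc
  have hc1 : c < 1 := Real.arccos_pos.mp hang₀
  have hc0 : 0 < c := Real.arccos_lt_pi_div_two.mp hang₁
  have hαpos : 0 < |α| := by
    have := mul_pos hnx hny
    have := (div_pos_iff.mp (hc ▸ hc0)).resolve_right (by intro ⟨_, h⟩; linarith)
    exact this.1
  have hcos : Real.cos (ang x y) = c := Real.cos_arccos (by linarith) hc1.le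
  have hsin : Real.sin (ang x y) = Real.sqrt (1 - c^2) := by
    rw [ang, Real.sin_arccos, hc, hα]
  have htan : Real.tan (ang x y) = Real.sqrt (1 - c^2) / c := by
    rw [Real.tan_eq_sin_div_cos, hsin, hcos]
  set u := x - (α / ‖y‖ ^ 2) • y with hu
  have huy : ⟪u, y⟫ = 0 := by
    rw [hu, inner_sub_left, real_inner_smul_left, hyy]
    field_simp
    exact sub_eq_zero.mpr hα.symm
  have hρy : ⟪y, A y⟫ = ρ * ‖y‖^2 := by
    rw [hρ, rq, hyy]; field_simp
  have hxAy : ⟪x, A y⟫ = lam * α := by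
    have h := hsym x y
    simp only [ContinuousLinearMap.coe_coe] at h
    rw [← h, heig, real_inner_smul_left, hα]
  have hur : ⟪u, res A y⟫ = (lam - ρ) * α := by
    rw [res, ← hρ, inner_sub_right, hu, inner_sub_left, inner_sub_left,
      real_inner_smul_left, real_inner_smul_left, real_inner_smul_right,
      real_inner_smul_right, hxAy, hρy, hyy, ← hα]
    field_simp
    ring
  have hyres : ⟪y, res A y⟫ = 0 := by
    rw [res, ← hρ, inner_sub_right, real_inner_smul_right, hyy, hρy]
    ring
  have hnu2 : ‖u‖^2 = ‖x‖^2 * (1 - c^2) := by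
    have h1 : ⟪u, u⟫ = ‖x‖^2 - α^2/‖y‖^2 := by
      rw [hu, real_inner_sub_sub_self, real_inner_smul_right, real_inner_smul_left,
        real_inner_smul_right, hyy, real_inner_self_eq_norm_sq, ← hα]
      field_simp
      ring
    have h2 : c^2 = α^2 / (‖x‖^2 * ‖y‖^2) := by
      rw [hc, div_pow, sq_abs, mul_pow]
    rw [← real_inner_self_eq_norm_sq, h1, h2]
    field_simp
  have h12 : 0 < 1 - c^2 := by nlinarith
  have hnu : ‖u‖ = ‖x‖ * Real.sqrt (1 - c^2) := by
    rw [← Real.sqrt_sq (norm_nonneg u), hnu2, Real.sqrt_mul (sq_nonneg _),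
      Real.sqrt_sq hnx.le]
  have hupos : 0 < ‖u‖ := by
    rw [hnu]; positivity
  have hune : u ≠ 0 := norm_pos_iff.mp hupos
  have hkey : Real.tan (ang x y) * |α| = ‖u‖ * ‖y‖ := by
    rw [htan, hnu, hc]
    field_simp
  have htan2 : Real.tan (ang x y) = ‖u‖ * ‖y‖ / |α| := (eq_div_iff hαpos.ne').mpr hkey
  have hRHS : ‖res A y‖ / ‖y‖ * Real.tan (ang x y) = ‖u‖ * ‖res A y‖ / |α| := by
    rw [htan2]
    field_simp
  have hCS : |⟪u, res A y⟫| ≤ ‖u‖ * ‖res A y‖ := abs_real_inner_le_norm u (res A y)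
  have habs : |lam - ρ| * |α| = |⟪u, res A y⟫| := by rw [hur, abs_mul]
  have hineq : |lam - ρ| ≤ ‖res A y‖ / ‖y‖ * Real.tan (ang x y) := by
    rw [hRHS, le_div_iff₀ hαpos]
    rw [habs]
    exact hCS
  have heqiff : (|lam - ρ| = ‖res A y‖ / ‖y‖ * Real.tan (ang x y)) ↔
      |⟪u, res A y⟫| = ‖u‖ * ‖res A y‖ := by
    rw [hRHS, eq_div_iff hαpos.ne', habs]
  have hxmem : x ∈ span ℝ ({x, y} : Set H) := subset_span (Set.mem_insert _ _)
  have hymem : y ∈ span ℝ ({x, y} : Set H) := subset_span (Set.mem_insert_of_mem _ rfl)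
  have humem : u ∈ span ℝ ({x, y} : Set H) := by
    rw [hu]; exact sub_mem hxmem (smul_mem _ _ hymem)
  have hAy_eq : A y = res A y + ρ • y := by
    rw [res, ← hρ, sub_add_cancel]
  have hinv_of : A y ∈ span ℝ ({x, y} : Set H) →
      ∀ z ∈ span ℝ ({x, y} : Set H), A z ∈ span ℝ ({x, y} : Set H) := by
    intro hAy z hz
    rcases Submodule.mem_span_pair.mp hz with ⟨a, b, rfl⟩
    rw [map_add, map_smul, map_smul, heig]
    exact add_mem (smul_mem _ _ (smul_mem _ _ hxmem)) (smul_mem _ _ hAy)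
  refine ⟨hineq, heqiff.trans ⟨?_, ?_⟩⟩
  · intro heq
    by_cases hres : res A y = 0
    · apply hinv_of
      rw [hAy_eq, hres, zero_add]
      exact smul_mem _ _ hymem
    · have heq' : ‖(⟪u, res A y⟫ : ℝ)‖ = ‖u‖ * ‖res A y‖ := by
        rw [Real.norm_eq_abs]; exact heq
      obtain ⟨t, ht, hres_eq⟩ := (norm_inner_eq_norm_iff hune hres).mp heq'
      apply hinv_of
      rw [hAy_eq, hres_eq]
      exact add_mem (smul_mem _ _ humem) (smul_mem _ _ hymem)
  · intro hinvv
    have hres_mem : res A y ∈ span ℝ ({x, y} : Set H) := by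
      rw [res, ← hρ]
      exact sub_mem (hinvv y hymem) (smul_mem _ _ hymem)
    rcases Submodule.mem_span_pair.mp hres_mem with ⟨a, b, hab⟩
    have h0 : a * α + b * ‖y‖^2 = 0 := by
      have h := hyres
      rw [← hab, inner_add_right, real_inner_smul_right, real_inner_smul_right] at h
      rw [real_inner_comm x y, hyy] at h
      rw [hα]
      linarith
    have hb : b = -(a * (α / ‖y‖^2)) := by
      field_simp at h0 ⊢
      linarith
    have hres_u : res A y = a • u := by
      rw [← hab, hu, smul_sub, smul_smul, hb]
      rw [neg_smul]
      abel
    rw [hres_u, real_inner_smul_right, real_inner_self_eq_norm_sq, norm_smul,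
      Real.norm_eq_abs, abs_mul, abs_of_nonneg (sq_nonneg (‖u‖))]
    ring
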